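/- Let Γ be a connected Tait-colored cubic graph with more than one red-blue cycle. Then there exists a green edge of Γ whose two endpoints lie on distinct red-blue cycles, and compressing Γ along this edge decreases the number of red-blue cycles by one while not increasing the number of blue-green cycles or green-red cycles. -/

import Mathlib

/-- A Tait-colored cubic graph (multigraphs allowed), encoded by three
fixed-point-free involutions on the vertex set, one for each color `c : Fin 3`:
`mat c` matches every vertex to the other endpoint of its unique edge of color `c`. -/
structure TaitGraph (V : Type) where
  mat : Fin 3 → V → V
  invol : ∀ c v, mat c (mat c v) = v
  nofix : ∀ c v, mat c v ≠ v

namespace TaitGraph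

variable {V V' : Type}

/-- Two vertices lie on the same bi-colored cycle of the two colors other than `c`. -/
def Conn (Γ : TaitGraph V) (c : Fin 3) : V → V → Prop :=
  Relation.ReflTransGen (fun x y => ∃ c', c' ≠ c ∧ Γ.mat c' x = y)

/-- The patch number for the pair of colors other than `c`: the number of
bi-colored cycles of those two colors. -/
noncomputable def patches (Γ : TaitGraph V) (c : Fin 3) : ℕ :=
  Nat.card (Quot (Γ.Conn c))

def OnePatch (Γ : TaitGraph V) : Prop := ∀ c, Γ.patches c = 1

def Bipartite (Γ : TaitGraph V) : Prop :=
  ∃ s : V → Bool, ∀ c v, s (Γ.mat c v) = !s v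

def Connected (Γ : TaitGraph V) : Prop :=
  Nonempty V ∧ ∀ x y : V, Relation.ReflTransGen (fun a b => ∃ c, Γ.mat c a = b) x y

/-- The number of edges: for each color, the edges of that color are the orbits
of the corresponding involution. -/
noncomputable def edgeCount (Γ : TaitGraph V) : ℕ :=
  ∑ c : Fin 3, Nat.card (Quot (fun x y : V => Γ.mat c x = y))

/-- Euler characteristic of the induced surface, computed from its CW structure:
vertices minus edges plus 2-cells (one 2-cell per bi-colored cycle). -/
noncomputable def chiS (Γ : TaitGraph V) : ℤ :=
  (Nat.card V : ℤ) - (Γ.edgeCount : ℤ) + (∑ c : Fin 3, (Γ.patches c : ℤ))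

/-- The edge of color `c` at `v` is orientation-reversing: its endpoints lie on the same
bi-colored cycle of the other two colors and receive the same sign in any alternating
`±`-labeling of the bi-colored cycles. -/
def OrientationReversing (Γ : TaitGraph V) (c : Fin 3) (v : V) : Prop :=
  Γ.Conn c v (Γ.mat c v) ∧
    ∀ s : V → Bool, (∀ c' v', c' ≠ c → s (Γ.mat c' v') = !s v') → s (Γ.mat c v) = s v

/-- The edge of color `c` at `v` is orientation-preserving: its endpoints lie on the same
bi-colored cycle of the other two colors and receive opposite signs in any alternating
`±`-labeling of the bi-colored cycles. -/
def OrientationPreserving (Γ : TaitGraph V) (c : Fin 3) (v : V) : Prop :=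
  Γ.Conn c v (Γ.mat c v) ∧
    ∀ s : V → Bool, (∀ c' v', c' ≠ c → s (Γ.mat c' v') = !s v') → s (Γ.mat c v) = !s v

/-- `Γ'` is the compression of `Γ` along the (non-parallel) edge of color `c` with
endpoints `v` and `Γ.mat c v`: delete the edge and its endpoints, and for each of the
other two colors merge the two deleted-vertex edges into a single edge. -/
def IsCompression (Γ : TaitGraph V) (c : Fin 3) (v : V) (Γ' : TaitGraph V') : Prop :=
  ∃ φ : V' ≃ {w : V // w ≠ v ∧ w ≠ Γ.mat c v},
    (∀ w : V', ((φ (Γ'.mat c w) : V)) = Γ.mat c ((φ w : V))) ∧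
    ∀ c' : Fin 3, c' ≠ c → ∀ w : V',
      (Γ.mat c' ((φ w : V)) = v ∧ ((φ (Γ'.mat c' w) : V)) = Γ.mat c' (Γ.mat c v)) ∨
      (Γ.mat c' ((φ w : V)) = Γ.mat c v ∧ ((φ (Γ'.mat c' w) : V)) = Γ.mat c' v) ∨
      (Γ.mat c' ((φ w : V)) ≠ v ∧ Γ.mat c' ((φ w : V)) ≠ Γ.mat c v ∧
        ((φ (Γ'.mat c' w) : V)) = Γ.mat c' ((φ w : V)))

-- Auxiliary machinery

lemma mat_injective (Γ : TaitGraph V) (c : Fin 3) : Function.Injective (Γ.mat c) := by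
  intro x y h
  have h2 := congrArg (Γ.mat c) h
  rwa [Γ.invol, Γ.invol] at h2

lemma conn_symm (Γ : TaitGraph V) {c : Fin 3} {x y : V} (h : Γ.Conn c x y) : Γ.Conn c y x := by
  induction h with
  | refl => exact Relation.ReflTransGen.refl
  | tail _ hst ih =>
    obtain ⟨c', hc', hm⟩ := hst
    exact Relation.ReflTransGen.head ⟨c', hc', by rw [← hm, Γ.invol]⟩ ih

lemma conn_step (Γ : TaitGraph V) {c c' : Fin 3} (h : c' ≠ c) (x : V) :
    Γ.Conn c x (Γ.mat c' x) := Relation.ReflTransGen.single ⟨c', h, rfl⟩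

lemma conn_equivalence (Γ : TaitGraph V) (c : Fin 3) : Equivalence (Γ.Conn c) :=
  ⟨fun _ => Relation.ReflTransGen.refl, Γ.conn_symm, fun h h' => h.trans h'⟩

lemma conn_of_mk_eq (Γ : TaitGraph V) {c : Fin 3} {x y : V}
    (h : Quot.mk (Γ.Conn c) x = Quot.mk (Γ.Conn c) y) : Γ.Conn c x y :=
  ((Γ.conn_equivalence c).eqvGen_iff).mp (Quot.eq.mp h)

section Comp

variable (Γ : TaitGraph V) (v : V)

lemma m2_ne_v (w : V) (hw : w ≠ Γ.mat 2 v) : Γ.mat 2 w ≠ v := by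
  intro h; apply hw; rw [← h, Γ.invol]

lemma m2_ne_m2 (w : V) (hw : w ≠ v) : Γ.mat 2 w ≠ Γ.mat 2 v :=
  fun h => hw (Γ.mat_injective 2 h)

lemma matv_ne_m2 (hv : ¬ Γ.Conn 2 v (Γ.mat 2 v)) {c : Fin 3} (hc : c ≠ 2) : Γ.mat c v ≠ Γ.mat 2 v := by
  intro h; exact hv (Relation.ReflTransGen.single ⟨c, hc, h⟩)

lemma matm2_ne_v (hv : ¬ Γ.Conn 2 v (Γ.mat 2 v)) {c : Fin 3} (hc : c ≠ 2) : Γ.mat c (Γ.mat 2 v) ≠ v := by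
  intro h
  exact hv (Γ.conn_symm (Relation.ReflTransGen.single ⟨c, hc, h⟩))

lemma mem_of_conn (hv : ¬ Γ.Conn 2 v (Γ.mat 2 v)) {u : V} (hu : u = v ∨ u = Γ.mat 2 v) {x : V}
    (hx : Γ.Conn 2 u x) (hxu : x ≠ u) : x ≠ v ∧ x ≠ Γ.mat 2 v := by
  rcases hu with rfl | rfl
  · exact ⟨hxu, fun h => hv (h ▸ hx)⟩
  · exact ⟨fun h => hv (Γ.conn_symm (h ▸ hx)), hxu⟩

open Classical in
noncomputable def compMat (hv : ¬ Γ.Conn 2 v (Γ.mat 2 v)) (c : Fin 3) (w : {w : V // w ≠ v ∧ w ≠ Γ.mat 2 v}) :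
    {w : V // w ≠ v ∧ w ≠ Γ.mat 2 v} :=
  if hc : c = 2 then ⟨Γ.mat 2 w.1, Γ.m2_ne_v v w.1 w.2.2, Γ.m2_ne_m2 v w.1 w.2.1⟩
  else if _h1 : Γ.mat c w.1 = v then
    ⟨Γ.mat c (Γ.mat 2 v), Γ.matm2_ne_v v hv hc, Γ.nofix c (Γ.mat 2 v)⟩
  else if _h2 : Γ.mat c w.1 = Γ.mat 2 v then
    ⟨Γ.mat c v, Γ.nofix c v, Γ.matv_ne_m2 v hv hc⟩
  else ⟨Γ.mat c w.1, _h1, _h2⟩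

lemma compMat_two (hv : ¬ Γ.Conn 2 v (Γ.mat 2 v)) (w) :
    (Γ.compMat v hv 2 w).1 = Γ.mat 2 w.1 := by
  rw [compMat, dif_pos rfl]

lemma compMat_a (hv : ¬ Γ.Conn 2 v (Γ.mat 2 v)) {c : Fin 3} (hc : c ≠ 2) (w) (h : Γ.mat c w.1 = v) :
    (Γ.compMat v hv c w).1 = Γ.mat c (Γ.mat 2 v) := by
  rw [compMat, dif_neg hc, dif_pos h]

lemma compMat_b (hv : ¬ Γ.Conn 2 v (Γ.mat 2 v)) {c : Fin 3} (hc : c ≠ 2) (w) (h : Γ.mat c w.1 = Γ.mat 2 v) :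
    (Γ.compMat v hv c w).1 = Γ.mat c v := by
  have h1 : ¬ Γ.mat c w.1 = v := fun h' => Γ.nofix 2 v (h.symm.trans h')
  rw [compMat, dif_neg hc, dif_neg h1, dif_pos h]

lemma compMat_c (hv : ¬ Γ.Conn 2 v (Γ.mat 2 v)) {c : Fin 3} (hc : c ≠ 2) (w) (h1 : Γ.mat c w.1 ≠ v)
    (h2 : Γ.mat c w.1 ≠ Γ.mat 2 v) :
    (Γ.compMat v hv c w).1 = Γ.mat c w.1 := by
  rw [compMat, dif_neg hc, dif_neg h1, dif_neg h2]

noncomputable def comp (hv : ¬ Γ.Conn 2 v (Γ.mat 2 v)) : TaitGraph {w : V // w ≠ v ∧ w ≠ Γ.mat 2 v} where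
  mat := Γ.compMat v hv
  invol := by
    intro c w
    by_cases hc : c = 2
    · subst hc
      apply Subtype.ext
      rw [compMat_two, compMat_two, Γ.invol]
    · apply Subtype.ext
      by_cases h1 : Γ.mat c w.1 = v
      · have hi : (Γ.compMat v hv c w).1 = Γ.mat c (Γ.mat 2 v) := Γ.compMat_a v hv hc w h1
        have ho : Γ.mat c (Γ.compMat v hv c w).1 = Γ.mat 2 v := by rw [hi, Γ.invol]
        rw [Γ.compMat_b v hv hc _ ho]
        exact (congrArg (Γ.mat c) h1).symm.trans (Γ.invol c w.1)
      · by_cases h2 : Γ.mat c w.1 = Γ.mat 2 v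
        · have hi : (Γ.compMat v hv c w).1 = Γ.mat c v := Γ.compMat_b v hv hc w h2
          have ho : Γ.mat c (Γ.compMat v hv c w).1 = v := by rw [hi, Γ.invol]
          rw [Γ.compMat_a v hv hc _ ho]
          exact (congrArg (Γ.mat c) h2).symm.trans (Γ.invol c w.1)
        · have hi : (Γ.compMat v hv c w).1 = Γ.mat c w.1 := Γ.compMat_c v hv hc w h1 h2
          have ho : Γ.mat c (Γ.compMat v hv c w).1 = w.1 := by rw [hi, Γ.invol]
          rw [Γ.compMat_c v hv hc _ (ho ▸ w.2.1) (ho ▸ w.2.2), ho]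
  nofix := by
    intro c w hw
    have hw' := congrArg Subtype.val hw
    by_cases hc : c = 2
    · subst hc
      rw [compMat_two] at hw'
      exact Γ.nofix 2 w.1 hw'
    · by_cases h1 : Γ.mat c w.1 = v
      · rw [Γ.compMat_a v hv hc w h1] at hw'
        have : w.1 = Γ.mat c v := ((congrArg (Γ.mat c) h1).symm.trans (Γ.invol c w.1)).symm
        rw [this] at hw'
        exact Γ.nofix 2 v (Γ.mat_injective c hw')
      · by_cases h2 : Γ.mat c w.1 = Γ.mat 2 v
        · rw [Γ.compMat_b v hv hc w h2] at hw'
          have : w.1 = Γ.mat c (Γ.mat 2 v) := ((congrArg (Γ.mat c) h2).symm.trans (Γ.invol c w.1)).symm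
          rw [this] at hw'
          exact Γ.nofix 2 v (Γ.mat_injective c hw').symm
        · rw [Γ.compMat_c v hv hc w h1 h2] at hw'
          exact Γ.nofix c w.1 hw'

lemma comp_isCompression (hv : ¬ Γ.Conn 2 v (Γ.mat 2 v)) : Γ.IsCompression 2 v (Γ.comp v hv) := by
  refine ⟨Equiv.refl _, fun w => ?_, fun c' hc' w => ?_⟩
  · exact Γ.compMat_two v hv w
  · by_cases h1 : Γ.mat c' ((Equiv.refl _ w : {w : V // w ≠ v ∧ w ≠ Γ.mat 2 v}) : V) = v
    · exact Or.inl ⟨h1, Γ.compMat_a v hv hc' w h1⟩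
    · by_cases h2 : Γ.mat c' (w : V) = Γ.mat 2 v
      · exact Or.inr (Or.inl ⟨h2, Γ.compMat_b v hv hc' w h2⟩)
      · exact Or.inr (Or.inr ⟨h1, h2, Γ.compMat_c v hv hc' w h1 h2⟩)

lemma comp_step (hv : ¬ Γ.Conn 2 v (Γ.mat 2 v)) {c' : Fin 3} (hc' : c' ≠ 2) {x y : V} (hx : x ≠ v ∧ x ≠ Γ.mat 2 v)
    (hy1 : y ≠ v) (hy2 : y ≠ Γ.mat 2 v) (h : Γ.mat c' x = y) :
    (Γ.comp v hv).mat c' ⟨x, hx⟩ = ⟨y, hy1, hy2⟩ := by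
  apply Subtype.ext
  show (Γ.compMat v hv c' ⟨x, hx⟩).1 = y
  rw [Γ.compMat_c v hv hc' ⟨x, hx⟩ (h ▸ hy1) (h ▸ hy2)]
  exact h

end Comp

lemma conn_symm_tail (Γ : TaitGraph V) {c c' : Fin 3} (hc : c' ≠ c) {x y z : V}
    (h : Γ.Conn c x y) (hm : Γ.mat c' z = y) : Γ.Conn c x z :=
  h.trans (Γ.conn_symm (Relation.ReflTransGen.single ⟨c', hc, hm⟩))

section Splice

variable {V : Type} (Γ : TaitGraph V) (v : V) (hv : ¬ Γ.Conn 2 v (Γ.mat 2 v))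

lemma splice [Finite V] {u : V} (hu : u = v ∨ u = Γ.mat 2 v)
    (h1 : Γ.mat 0 u ≠ v ∧ Γ.mat 0 u ≠ Γ.mat 2 v)
    (h2 : Γ.mat 1 u ≠ v ∧ Γ.mat 1 u ≠ Γ.mat 2 v) :
    (Γ.comp v hv).Conn 2 ⟨Γ.mat 0 u, h1⟩ ⟨Γ.mat 1 u, h2⟩ := by
  classical
  set f : V → V := fun x => Γ.mat 1 (Γ.mat 0 x) with hf
  have hfinj : Function.Injective f := fun a b h => Γ.mat_injective 0 (Γ.mat_injective 1 h)
  -- periodicity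
  have hper : ∃ k, 0 < k ∧ f^[k] u = u := by
    obtain ⟨m, m', hne, heq⟩ := Finite.exists_ne_map_eq_of_infinite (fun n : ℕ => f^[n] u)
    rcases Nat.lt_or_gt_of_ne hne with hlt | hlt
    · refine ⟨m' - m, by omega, ?_⟩
      have : f^[m + (m' - m)] u = f^[m] (f^[m'-m] u) := Function.iterate_add_apply f m _ u
      rw [show m + (m' - m) = m' by omega] at this
      exact (hfinj.iterate m) (this.symm.trans heq.symm)
    · refine ⟨m - m', by omega, ?_⟩
      have : f^[m' + (m - m')] u = f^[m'] (f^[m-m'] u) := Function.iterate_add_apply f m' _ u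
      rw [show m' + (m - m') = m by omega] at this
      exact (hfinj.iterate m') (this.symm.trans heq)
  set n := Nat.find hper with hn
  obtain ⟨hnpos, hnu⟩ : 0 < n ∧ f^[n] u = u := Nat.find_spec hper
  have hmin : ∀ j, 0 < j → j < n → f^[j] u ≠ u := by
    intro j hj hjn hju
    exact Nat.find_min hper hjn ⟨hj, hju⟩
  -- key identity
  have hkey : ∀ x : V, f (Γ.mat 0 (f x)) = Γ.mat 0 x := by
    intro x
    show Γ.mat 1 (Γ.mat 0 (Γ.mat 0 (Γ.mat 1 (Γ.mat 0 x)))) = Γ.mat 0 x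
    rw [Γ.invol, Γ.invol]
  have hA : ∀ (j : ℕ) (x : V), Γ.mat 0 x = f^[j] (Γ.mat 0 (f^[j] x)) := by
    intro j
    induction j with
    | zero => intro x; rfl
    | succ j ih =>
      intro x
      calc Γ.mat 0 x = f^[j] (Γ.mat 0 (f^[j] x)) := ih x
        _ = f^[j] (f (Γ.mat 0 (f (f^[j] x)))) := by rw [hkey]
        _ = f^[j+1] (Γ.mat 0 (f (f^[j] x))) := (Function.iterate_succ_apply f j _).symm
        _ = f^[j+1] (Γ.mat 0 (f^[j+1] x)) := by rw [← Function.iterate_succ_apply' f j x]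
  have hB : ∀ i : ℕ, f^[i] u ≠ Γ.mat 0 u := by
    intro i h
    rcases Nat.even_or_odd i with ⟨j, hj⟩ | ⟨j, hj⟩
    · subst hj
      rw [Function.iterate_add_apply, hA j u] at h
      have := (hfinj.iterate j) h
      exact Γ.nofix 0 (f^[j] u) this.symm
    · rw [show 2 * j + 1 = j + (j+1) by omega] at hj
      subst hj
      rw [Function.iterate_add_apply, hA j u] at h
      have h' : f^[j+1] u = Γ.mat 0 (f^[j] u) := (hfinj.iterate j) h
      have h2' : Γ.mat 1 (f^[j+1] u) = f^[j+1] u := by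
        conv_lhs => rw [h']
        rw [Function.iterate_succ_apply']
      exact Γ.nofix 1 (f^[j+1] u) h2'
  -- connectivity along the orbit
  have hConn : ∀ k : ℕ, Γ.Conn 2 u (f^[k] u) := by
    intro k
    induction k with
    | zero => exact Relation.ReflTransGen.refl
    | succ k ih =>
      rw [Function.iterate_succ_apply']
      exact (ih.tail ⟨0, by decide, rfl⟩).tail ⟨1, by decide, rfl⟩
  have hmemf : ∀ k : ℕ, 0 < k → k < n → f^[k] u ≠ v ∧ f^[k] u ≠ Γ.mat 2 v := by
    intro k hk hkn
    exact Γ.mem_of_conn v hv hu (hConn k) (hmin k hk hkn)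
  have hmemaf : ∀ k : ℕ, Γ.mat 0 (f^[k] u) ≠ v ∧ Γ.mat 0 (f^[k] u) ≠ Γ.mat 2 v := by
    intro k
    refine Γ.mem_of_conn v hv hu ((hConn k).tail ⟨0, by decide, rfl⟩) ?_
    intro h
    exact hB k ((congrArg (Γ.mat 0) h).symm.trans (Γ.invol 0 (f^[k] u))).symm
  have hchain : ∀ k : ℕ, k < n →
      (Γ.comp v hv).Conn 2 ⟨Γ.mat 0 u, h1⟩ ⟨Γ.mat 0 (f^[k] u), hmemaf k⟩ := by
    intro k
    induction k with
    | zero => intro _; exact Relation.ReflTransGen.refl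
    | succ k ih =>
      intro hkn
      have hk : k < n := Nat.lt_of_succ_lt hkn
      refine Relation.ReflTransGen.tail (b := ⟨f^[k+1] u, hmemf (k+1) (Nat.succ_pos k) hkn⟩)
        (Relation.ReflTransGen.tail (ih hk)
          ⟨1, by decide, Γ.comp_step v hv (by decide) (hmemaf k)
            (hmemf (k+1) (Nat.succ_pos k) hkn).1 (hmemf (k+1) (Nat.succ_pos k) hkn).2
            (Function.iterate_succ_apply' f k u).symm⟩)
        ⟨0, by decide, Γ.comp_step v hv (by decide) _ (hmemaf (k+1)).1 (hmemaf (k+1)).2 rfl⟩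
  have hlast : Γ.mat 0 (f^[n-1] u) = Γ.mat 1 u := by
    have : f (f^[n-1] u) = u := by
      have h0 : f^[n-1+1] u = u := by rw [show n-1+1 = n by omega]; exact hnu
      rwa [Function.iterate_succ_apply'] at h0
    have : Γ.mat 1 (Γ.mat 1 (Γ.mat 0 (f^[n-1] u))) = Γ.mat 1 u := congrArg (Γ.mat 1) this
    rwa [Γ.invol] at this
  have := hchain (n-1) (by omega)
  rwa [show (⟨Γ.mat 0 (f^[n-1] u), hmemaf (n-1)⟩ :
      {w : V // w ≠ v ∧ w ≠ Γ.mat 2 v}) = ⟨Γ.mat 1 u, h2⟩ from Subtype.ext hlast] at this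

end Splice

section Patches

variable {V : Type} (Γ : TaitGraph V) (v : V)

lemma comp_step_a (hv : ¬ Γ.Conn 2 v (Γ.mat 2 v)) {c' : Fin 3} (hc' : c' ≠ 2) {x : V}
    (hx : x ≠ v ∧ x ≠ Γ.mat 2 v) (h : Γ.mat c' x = v) (hy1 hy2) :
    (Γ.comp v hv).mat c' ⟨x, hx⟩ = ⟨Γ.mat c' (Γ.mat 2 v), hy1, hy2⟩ :=
  Subtype.ext (Γ.compMat_a v hv hc' ⟨x, hx⟩ h)

lemma comp_step_b (hv : ¬ Γ.Conn 2 v (Γ.mat 2 v)) {c' : Fin 3} (hc' : c' ≠ 2) {x : V}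
    (hx : x ≠ v ∧ x ≠ Γ.mat 2 v) (h : Γ.mat c' x = Γ.mat 2 v) (hy1 hy2) :
    (Γ.comp v hv).mat c' ⟨x, hx⟩ = ⟨Γ.mat c' v, hy1, hy2⟩ :=
  Subtype.ext (Γ.compMat_b v hv hc' ⟨x, hx⟩ h)

lemma patches_le [Finite V] (hv : ¬ Γ.Conn 2 v (Γ.mat 2 v)) {c d : Fin 3} (hcd : d ≠ c)
    (hc2 : c ≠ 2) (hd2 : d ≠ 2) (hall : ∀ c' : Fin 3, c' ≠ c → c' = d ∨ c' = 2) :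
    (Γ.comp v hv).patches c ≤ Γ.patches c := by
  classical
  set Γ' := Γ.comp v hv with hΓ'
  let σ : V → {w : V // w ≠ v ∧ w ≠ Γ.mat 2 v} := fun w =>
    if h1 : w = v then ⟨Γ.mat d v, Γ.nofix d v, Γ.matv_ne_m2 v hv hd2⟩
    else if h2 : w = Γ.mat 2 v then
      ⟨Γ.mat d (Γ.mat 2 v), Γ.matm2_ne_v v hv hd2, Γ.nofix d _⟩
    else ⟨w, h1, h2⟩
  have hσv : σ v = ⟨Γ.mat d v, Γ.nofix d v, Γ.matv_ne_m2 v hv hd2⟩ := dif_pos rfl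
  have hσ2 : σ (Γ.mat 2 v) =
      ⟨Γ.mat d (Γ.mat 2 v), Γ.matm2_ne_v v hv hd2, Γ.nofix d _⟩ := by
    have h1 : Γ.mat 2 v ≠ v := Γ.nofix 2 v
    show dite _ _ _ = _
    rw [dif_neg h1, dif_pos rfl]
  have hσo : ∀ w (h1 : w ≠ v) (h2 : w ≠ Γ.mat 2 v), σ w = ⟨w, h1, h2⟩ := by
    intro w h1 h2
    show dite _ _ _ = _
    rw [dif_neg h1, dif_neg h2]
  have hgen : ∀ x y : V, (∃ c', c' ≠ c ∧ Γ.mat c' x = y) → Γ'.Conn c (σ x) (σ y) := by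
    rintro x y ⟨c', hc', hstep⟩
    by_cases h2c : c' = 2
    case neg =>
      have hd : c' = d := (hall c' hc').resolve_right h2c
      rw [hd] at hstep
      -- step of color d
      by_cases hx1 : x = v
      · rw [hx1] at hstep ⊢; subst hstep
        rw [hσv, hσo (Γ.mat d v) (Γ.nofix d v) (Γ.matv_ne_m2 v hv hd2)]
        exact Relation.ReflTransGen.refl
      · by_cases hx2 : x = Γ.mat 2 v
        · rw [hx2] at hstep ⊢; subst hstep
          rw [hσ2, hσo _ (Γ.matm2_ne_v v hv hd2) (Γ.nofix d _)]
          exact Relation.ReflTransGen.refl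
        · subst hstep
          by_cases hy1 : Γ.mat d x = v
          · have hx : Γ.mat d v = x :=
              (congrArg (Γ.mat d) hy1).symm.trans (Γ.invol d x)
            rw [hσo x hx1 hx2, hy1, hσv]
            rw [show (⟨Γ.mat d v, Γ.nofix d v, Γ.matv_ne_m2 v hv hd2⟩ :
              {w : V // w ≠ v ∧ w ≠ Γ.mat 2 v}) = ⟨x, hx1, hx2⟩ from Subtype.ext hx]
            exact Relation.ReflTransGen.refl
          · by_cases hy2 : Γ.mat d x = Γ.mat 2 v
            · have hx : Γ.mat d (Γ.mat 2 v) = x :=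
                (congrArg (Γ.mat d) hy2).symm.trans (Γ.invol d x)
              rw [hσo x hx1 hx2, hy2, hσ2]
              rw [show (⟨Γ.mat d (Γ.mat 2 v), Γ.matm2_ne_v v hv hd2, Γ.nofix d _⟩ :
                {w : V // w ≠ v ∧ w ≠ Γ.mat 2 v}) = ⟨x, hx1, hx2⟩ from Subtype.ext hx]
              exact Relation.ReflTransGen.refl
            · rw [hσo x hx1 hx2, hσo (Γ.mat d x) hy1 hy2]
              exact Relation.ReflTransGen.single
                ⟨d, hcd, Γ.comp_step v hv hd2 _ hy1 hy2 rfl⟩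
    case pos =>
      subst h2c
      -- step of color 2
      by_cases hx1 : x = v
      · rw [hx1] at hstep ⊢; subst hstep
        rw [hσv, hσ2]
        exact Relation.ReflTransGen.single
          ⟨d, hcd, Γ.comp_step_a v hv hd2 _ (Γ.invol d v) (Γ.matm2_ne_v v hv hd2) (Γ.nofix d _)⟩
      · by_cases hx2 : x = Γ.mat 2 v
        · rw [hx2] at hstep ⊢; subst hstep
          have h2v : Γ.mat 2 (Γ.mat 2 v) = v := Γ.invol 2 v
          rw [h2v, hσ2, hσv]
          exact Relation.ReflTransGen.single
            ⟨d, hcd, Γ.comp_step_b v hv hd2 _ (Γ.invol d (Γ.mat 2 v)) (Γ.nofix d v) (Γ.matv_ne_m2 v hv hd2)⟩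
        · subst hstep
          have hy1 : Γ.mat 2 x ≠ v := Γ.m2_ne_v v x hx2
          have hy2 : Γ.mat 2 x ≠ Γ.mat 2 v := Γ.m2_ne_m2 v x hx1
          rw [hσo x hx1 hx2, hσo _ hy1 hy2]
          refine Relation.ReflTransGen.single ⟨2, Ne.symm hc2, ?_⟩
          apply Subtype.ext
          exact Γ.compMat_two v hv ⟨x, hx1, hx2⟩
  have hconn' : ∀ x y : V, Γ.Conn c x y → Γ'.Conn c (σ x) (σ y) := by
    intro x y h
    induction h with
    | refl => exact Relation.ReflTransGen.refl
    | tail _ hstep ih => exact ih.trans (hgen _ _ hstep)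
  let F : Quot (Γ.Conn c) → Quot (Γ'.Conn c) :=
    Quot.lift (fun w => Quot.mk (Γ'.Conn c) (σ w))
      (fun a b h => Quot.sound (hconn' a b h))
  have hsurj : Function.Surjective F := by
    intro q
    obtain ⟨w', rfl⟩ := Quot.exists_rep q
    refine ⟨Quot.mk _ w'.1, ?_⟩
    show Quot.mk _ (σ w'.1) = Quot.mk _ w'
    rw [hσo w'.1 w'.2.1 w'.2.2]
  exact Nat.card_le_card_of_surjective F hsurj

lemma patches_two [Finite V] (hv : ¬ Γ.Conn 2 v (Γ.mat 2 v)) :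
    (Γ.comp v hv).patches 2 + 1 = Γ.patches 2 := by
  classical
  have h02 : (0 : Fin 3) ≠ 2 := by decide
  have h12 : (1 : Fin 3) ≠ 2 := by decide
  have hmembm : Γ.mat 0 (Γ.mat 2 v) ≠ v ∧ Γ.mat 0 (Γ.mat 2 v) ≠ Γ.mat 2 v :=
    ⟨Γ.matm2_ne_v v hv h02, Γ.nofix 0 _⟩
  have hmembv : Γ.mat 0 v ≠ v ∧ Γ.mat 0 v ≠ Γ.mat 2 v :=
    ⟨Γ.nofix 0 v, Γ.matv_ne_m2 v hv h02⟩
  -- lifting Γ'-paths that start away from the affected cycles back to Γ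
  have lift_conn : ∀ (x y : {w : V // w ≠ v ∧ w ≠ Γ.mat 2 v}),
      (Γ.comp v hv).Conn 2 x y → ¬ Γ.Conn 2 v x.1 → ¬ Γ.Conn 2 (Γ.mat 2 v) x.1 →
      Γ.Conn 2 x.1 y.1 ∧ ¬ Γ.Conn 2 v y.1 ∧ ¬ Γ.Conn 2 (Γ.mat 2 v) y.1 := by
    intro x y h hx1 hx2
    induction h with
    | refl => exact ⟨Relation.ReflTransGen.refl, hx1, hx2⟩
    | @tail b y' hb hstep ih =>
      obtain ⟨hcxb, hb1, hb2⟩ := ih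
      obtain ⟨c', hc'2, hm⟩ := hstep
      by_cases hbv : Γ.mat c' b.1 = v
      · exact absurd (Γ.conn_symm (Relation.ReflTransGen.single ⟨c', hc'2, hbv⟩)) hb1
      · by_cases hbm : Γ.mat c' b.1 = Γ.mat 2 v
        · exact absurd (Γ.conn_symm (Relation.ReflTransGen.single ⟨c', hc'2, hbm⟩)) hb2
        · have hy : y'.1 = Γ.mat c' b.1 :=
            (congrArg Subtype.val hm).symm.trans (Γ.compMat_c v hv hc'2 b hbv hbm)
          have hback : Γ.mat c' y'.1 = b.1 :=
            (congrArg (Γ.mat c') hy).trans (Γ.invol c' b.1)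
          refine ⟨hcxb.tail ⟨c', hc'2, hy.symm⟩, ?_, ?_⟩
          · exact fun hc => hb1 (hc.tail ⟨c', hc'2, hback⟩)
          · exact fun hc => hb2 (hc.tail ⟨c', hc'2, hback⟩)
  -- Part 1: an injection from patches of Γ into patches of Γ' plus one
  let g : V → Quot ((Γ.comp v hv).Conn 2) ⊕ Unit := fun w =>
    if h1 : Γ.Conn 2 v w then Sum.inr ()
    else if h2 : Γ.Conn 2 (Γ.mat 2 v) w then
      Sum.inl (Quot.mk _ ⟨Γ.mat 0 (Γ.mat 2 v), hmembm⟩)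
    else Sum.inl (Quot.mk _ ⟨w, fun e => h1 (by rw [e]; exact Relation.ReflTransGen.refl),
      fun e => h2 (by rw [e]; exact Relation.ReflTransGen.refl)⟩)
  have hgiff : ∀ (z x y : V) (c' : Fin 3), c' ≠ 2 → Γ.mat c' x = y →
      (Γ.Conn 2 z x ↔ Γ.Conn 2 z y) := by
    intro z x y c' hc' hm
    constructor
    · intro h; exact h.tail ⟨c', hc', hm⟩
    · intro h; exact Γ.conn_symm_tail hc' h hm
  have hgsound : ∀ x y : V, Γ.Conn 2 x y → g x = g y := by
    intro x y h
    induction h with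
    | refl => rfl
    | @tail b y' hb hstep ih =>
      rw [ih]
      obtain ⟨c', hc'2, hm⟩ := hstep
      have h1iff := hgiff v b y' c' hc'2 hm
      have h2iff := hgiff (Γ.mat 2 v) b y' c' hc'2 hm
      by_cases h1 : Γ.Conn 2 v b
      · simp only [g, dif_pos h1, dif_pos (h1iff.mp h1)]
      · have hy1 : ¬ Γ.Conn 2 v y' := fun hc => h1 (h1iff.mpr hc)
        by_cases h2 : Γ.Conn 2 (Γ.mat 2 v) b
        · simp only [g, dif_neg h1, dif_neg hy1, dif_pos h2, dif_pos (h2iff.mp h2)]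
        · have hy2 : ¬ Γ.Conn 2 (Γ.mat 2 v) y' := fun hc => h2 (h2iff.mpr hc)
          have hyv : y' ≠ v := fun e => hy1 (by rw [e]; exact Relation.ReflTransGen.refl)
          have hym : y' ≠ Γ.mat 2 v :=
            fun e => hy2 (by rw [e]; exact Relation.ReflTransGen.refl)
          simp only [g, dif_neg h1, dif_neg hy1, dif_neg h2, dif_neg hy2]
          exact congrArg Sum.inl (Quot.sound (Relation.ReflTransGen.single
            ⟨c', hc'2, Γ.comp_step v hv hc'2 _ hyv hym hm⟩))
  have hGinj : Function.Injective
      (Quot.lift g hgsound : Quot (Γ.Conn 2) → Quot ((Γ.comp v hv).Conn 2) ⊕ Unit) := by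
    intro qa qb
    induction qa using Quot.ind with | _ x => ?_
    induction qb using Quot.ind with | _ y => ?_
    intro h
    change g x = g y at h
    by_cases h1x : Γ.Conn 2 v x <;> by_cases h1y : Γ.Conn 2 v y
    · exact Quot.sound ((Γ.conn_symm h1x).trans h1y)
    · exfalso
      by_cases h2y : Γ.Conn 2 (Γ.mat 2 v) y
      · simp only [g, dif_pos h1x, dif_neg h1y, dif_pos h2y] at h
        cases h
      · simp only [g, dif_pos h1x, dif_neg h1y, dif_neg h2y] at h
        cases h
    · exfalso
      by_cases h2x : Γ.Conn 2 (Γ.mat 2 v) x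
      · simp only [g, dif_pos h1y, dif_neg h1x, dif_pos h2x] at h
        cases h
      · simp only [g, dif_pos h1y, dif_neg h1x, dif_neg h2x] at h
        cases h
    · by_cases h2x : Γ.Conn 2 (Γ.mat 2 v) x <;> by_cases h2y : Γ.Conn 2 (Γ.mat 2 v) y
      · exact Quot.sound ((Γ.conn_symm h2x).trans h2y)
      · exfalso
        simp only [g, dif_neg h1x, dif_neg h1y, dif_pos h2x, dif_neg h2y] at h
        have hq := Sum.inl.inj h
        have hcc := (Γ.comp v hv).conn_symm ((Γ.comp v hv).conn_of_mk_eq hq)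
        have hl := lift_conn _ _ hcc
          (fun hc => h1y hc) (fun hc => h2y hc)
        have : Γ.Conn 2 y (Γ.mat 2 v) :=
          hl.1.tail ⟨0, h02, Γ.invol 0 (Γ.mat 2 v)⟩
        exact h2y (Γ.conn_symm this)
      · exfalso
        simp only [g, dif_neg h1x, dif_neg h1y, dif_neg h2x, dif_pos h2y] at h
        have hq := Sum.inl.inj h
        have hcc := (Γ.comp v hv).conn_of_mk_eq hq
        have hl := lift_conn _ _ hcc (fun hc => h1x hc) (fun hc => h2x hc)
        have : Γ.Conn 2 x (Γ.mat 2 v) :=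
          hl.1.tail ⟨0, h02, Γ.invol 0 (Γ.mat 2 v)⟩
        exact h2x (Γ.conn_symm this)
      · simp only [g, dif_neg h1x, dif_neg h1y, dif_neg h2x, dif_neg h2y] at h
        have hq := Sum.inl.inj h
        have hcc := (Γ.comp v hv).conn_of_mk_eq hq
        have hl := lift_conn _ _ hcc (fun hc => h1x hc) (fun hc => h2x hc)
        exact Quot.sound hl.1
  have hcard1 : Nat.card (Quot (Γ.Conn 2)) ≤ Nat.card (Quot ((Γ.comp v hv).Conn 2)) + 1 := by
    have hle := Nat.card_le_card_of_injective _ hGinj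
    have hu : Nat.card Unit = 1 := Nat.card_unique
    rwa [Nat.card_sum, hu] at hle
  -- Part 2: a non-injective surjection from patches of Γ onto patches of Γ'
  let ψ : V → {w : V // w ≠ v ∧ w ≠ Γ.mat 2 v} := fun w =>
    if h1 : w = v then ⟨Γ.mat 0 v, hmembv⟩
    else if h2 : w = Γ.mat 2 v then ⟨Γ.mat 0 (Γ.mat 2 v), hmembm⟩
    else ⟨w, h1, h2⟩
  have hψv : ψ v = ⟨Γ.mat 0 v, hmembv⟩ := dif_pos rfl
  have hψ2 : ψ (Γ.mat 2 v) = ⟨Γ.mat 0 (Γ.mat 2 v), hmembm⟩ := by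
    show dite _ _ _ = _
    rw [dif_neg (Γ.nofix 2 v), dif_pos rfl]
  have hψo : ∀ w (h1 : w ≠ v) (h2 : w ≠ Γ.mat 2 v), ψ w = ⟨w, h1, h2⟩ := by
    intro w h1 h2
    show dite _ _ _ = _
    rw [dif_neg h1, dif_neg h2]
  have hψgen : ∀ x y : V, (∃ c', c' ≠ 2 ∧ Γ.mat c' x = y) →
      (Γ.comp v hv).Conn 2 (ψ x) (ψ y) := by
    rintro x y ⟨c', hc', hstep⟩
    have hc01 : c' = 0 ∨ c' = 1 := by
      fin_cases c'
      · exact Or.inl rfl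
      · exact Or.inr rfl
      · exact absurd rfl hc'
    by_cases hx1 : x = v
    · rw [hx1] at hstep ⊢
      subst hstep
      rcases hc01 with rfl | rfl
      · rw [hψv, hψo (Γ.mat 0 v) hmembv.1 hmembv.2]
        exact Relation.ReflTransGen.refl
      · rw [hψv, hψo (Γ.mat 1 v) (Γ.nofix 1 v) (Γ.matv_ne_m2 v hv h12)]
        exact Γ.splice v hv (Or.inl rfl) _ _
    · by_cases hx2 : x = Γ.mat 2 v
      · rw [hx2] at hstep ⊢
        subst hstep
        rcases hc01 with rfl | rfl
        · rw [hψ2, hψo (Γ.mat 0 (Γ.mat 2 v)) hmembm.1 hmembm.2]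
          exact Relation.ReflTransGen.refl
        · rw [hψ2, hψo (Γ.mat 1 (Γ.mat 2 v)) (Γ.matm2_ne_v v hv h12) (Γ.nofix 1 _)]
          exact Γ.splice v hv (Or.inr rfl) _ _
      · subst hstep
        by_cases hy1 : Γ.mat c' x = v
        · have hx : Γ.mat c' v = x :=
            (congrArg (Γ.mat c') hy1).symm.trans (Γ.invol c' x)
          rw [hψo x hx1 hx2, hy1, hψv]
          rcases hc01 with rfl | rfl
          · rw [show (⟨Γ.mat 0 v, hmembv⟩ : {w : V // w ≠ v ∧ w ≠ Γ.mat 2 v}) =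
              ⟨x, hx1, hx2⟩ from Subtype.ext hx]
            exact Relation.ReflTransGen.refl
          · rw [show (⟨x, hx1, hx2⟩ : {w : V // w ≠ v ∧ w ≠ Γ.mat 2 v}) =
              ⟨Γ.mat 1 v, Γ.nofix 1 v, Γ.matv_ne_m2 v hv h12⟩ from Subtype.ext hx.symm]
            exact (Γ.comp v hv).conn_symm (Γ.splice v hv (Or.inl rfl) _ _)
        · by_cases hy2 : Γ.mat c' x = Γ.mat 2 v
          · have hx : Γ.mat c' (Γ.mat 2 v) = x :=
              (congrArg (Γ.mat c') hy2).symm.trans (Γ.invol c' x)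
            rw [hψo x hx1 hx2, hy2, hψ2]
            rcases hc01 with rfl | rfl
            · rw [show (⟨Γ.mat 0 (Γ.mat 2 v), hmembm⟩ :
                {w : V // w ≠ v ∧ w ≠ Γ.mat 2 v}) = ⟨x, hx1, hx2⟩ from Subtype.ext hx]
              exact Relation.ReflTransGen.refl
            · rw [show (⟨x, hx1, hx2⟩ : {w : V // w ≠ v ∧ w ≠ Γ.mat 2 v}) =
                ⟨Γ.mat 1 (Γ.mat 2 v), Γ.matm2_ne_v v hv h12, Γ.nofix 1 _⟩ from
                Subtype.ext hx.symm]
              exact (Γ.comp v hv).conn_symm (Γ.splice v hv (Or.inr rfl) _ _)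
          · rw [hψo x hx1 hx2, hψo (Γ.mat c' x) hy1 hy2]
            exact Relation.ReflTransGen.single
              ⟨c', hc', Γ.comp_step v hv hc' _ hy1 hy2 rfl⟩
  have hψconn : ∀ x y : V, Γ.Conn 2 x y → (Γ.comp v hv).Conn 2 (ψ x) (ψ y) := by
    intro x y h
    induction h with
    | refl => exact Relation.ReflTransGen.refl
    | tail _ hstep ih => exact ih.trans (hψgen _ _ hstep)
  let Fψ : Quot (Γ.Conn 2) → Quot ((Γ.comp v hv).Conn 2) :=
    Quot.lift (fun w => Quot.mk _ (ψ w)) (fun a b h => Quot.sound (hψconn a b h))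
  have hFψsurj : Function.Surjective Fψ := by
    intro q
    induction q using Quot.ind with | _ w' => ?_
    refine ⟨Quot.mk _ w'.1, ?_⟩
    show Quot.mk _ (ψ w'.1) = Quot.mk _ w'
    rw [hψo w'.1 w'.2.1 w'.2.2]
  have hcol : Fψ (Quot.mk _ v) = Fψ (Quot.mk _ (Γ.mat 2 v)) := by
    show Quot.mk _ (ψ v) = Quot.mk _ (ψ (Γ.mat 2 v))
    rw [hψv, hψ2]
    exact Quot.sound (Relation.ReflTransGen.single
      ⟨0, h02, Γ.comp_step_a v hv h02 _ (Γ.invol 0 v) hmembm.1 hmembm.2⟩)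
  have hne : (Quot.mk (Γ.Conn 2) (Γ.mat 2 v)) ≠ Quot.mk (Γ.Conn 2) v :=
    fun h => hv (Γ.conn_of_mk_eq h.symm)
  have hsurj' : Function.Surjective
      (fun a : {q : Quot (Γ.Conn 2) // ¬ q = Quot.mk (Γ.Conn 2) v} => Fψ a.1) := by
    intro b
    obtain ⟨a, ha⟩ := hFψsurj b
    by_cases hav : a = Quot.mk (Γ.Conn 2) v
    · refine ⟨⟨Quot.mk _ (Γ.mat 2 v), hne⟩, ?_⟩
      show Fψ (Quot.mk _ (Γ.mat 2 v)) = b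
      rw [← hcol, ← hav]
      exact ha
    · exact ⟨⟨a, hav⟩, ha⟩
  have hcard2 : Nat.card (Quot ((Γ.comp v hv).Conn 2)) ≤
      Nat.card {q : Quot (Γ.Conn 2) // ¬ q = Quot.mk (Γ.Conn 2) v} :=
    Nat.card_le_card_of_surjective _ hsurj'
  have hA : Nat.card (Quot (Γ.Conn 2)) =
      Nat.card {q : Quot (Γ.Conn 2) // ¬ q = Quot.mk (Γ.Conn 2) v} + 1 := by
    haveI : Unique {q : Quot (Γ.Conn 2) // q = Quot.mk (Γ.Conn 2) v} :=
      ⟨⟨⟨_, rfl⟩⟩, fun x => Subtype.ext x.2⟩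
    have he : Nat.card ({q : Quot (Γ.Conn 2) // q = Quot.mk (Γ.Conn 2) v} ⊕
        {q : Quot (Γ.Conn 2) // ¬ q = Quot.mk (Γ.Conn 2) v}) = Nat.card (Quot (Γ.Conn 2)) :=
      Nat.card_congr (Equiv.sumCompl _)
    rw [Nat.card_sum, Nat.card_unique] at he
    omega
  show Nat.card (Quot ((Γ.comp v hv).Conn 2)) + 1 = Nat.card (Quot (Γ.Conn 2))
  omega

end Patches

end TaitGraph

/-- Bundled finite Tait-colored cubic graphs. -/
def TG : Type := Σ n : ℕ, TaitGraph (Fin n)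

/-- `Y` is obtained from `X` by a p-compression: compression along a connecting edge
(one whose endpoints lie on distinct bi-colored cycles of the opposite two colors). -/
def PComp (X Y : TG) : Prop :=
  ∃ (c : Fin 3) (v : Fin X.1),
    ¬ X.2.Conn c v (X.2.mat c v) ∧ X.2.IsCompression c v Y.2

/-- `Y` is obtained from `X` by a t-compression: compression along a non-parallel
orientation-preserving edge. -/
def TComp (X Y : TG) : Prop :=
  ∃ (c : Fin 3) (v : Fin X.1),
    X.2.OrientationPreserving c v ∧
    (∀ c' : Fin 3, c' ≠ c → X.2.mat c' v ≠ X.2.mat c v) ∧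
    X.2.IsCompression c v Y.2

/-- `Y` is obtained from `X` by a c-compression: compression along an
orientation-reversing edge. -/
def CComp (X Y : TG) : Prop :=
  ∃ (c : Fin 3) (v : Fin X.1),
    X.2.OrientationReversing c v ∧ X.2.IsCompression c v Y.2

/-- The theta graph: two vertices joined by three edges, one of each color.  (Any
Tait-colored cubic graph on two vertices is the theta graph.) -/
def IsTheta (X : TG) : Prop := X.1 = 2

/-- Let `Γ` be a connected Tait-colored cubic graph with more than one
red-blue cycle (red = color 0, blue = color 1; red-blue cycles are the bi-colored
cycles of the colors other than green = color 2).  Then there is a green edge whose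
endpoints lie on distinct red-blue cycles, and compressing along it decreases the
number of red-blue cycles by one while not increasing the number of blue-green
cycles or green-red cycles. -/
theorem connecting_edge_compression
    (V : Type) [Fintype V] (Γ : TaitGraph V) (hconn : Γ.Connected)
    (hp : 2 ≤ Γ.patches 2) :
    ∃ v : V, ¬ Γ.Conn 2 v (Γ.mat 2 v) ∧
      ∃ Γ' : TaitGraph {w : V // w ≠ v ∧ w ≠ Γ.mat 2 v},
        Γ.IsCompression 2 v Γ' ∧
        Γ'.patches 2 + 1 = Γ.patches 2 ∧
        Γ'.patches 0 ≤ Γ.patches 0 ∧ Γ'.patches 1 ≤ Γ.patches 1 := by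
  classical
  obtain ⟨x0, y0, hxy⟩ : ∃ x y : V, ¬ Γ.Conn 2 x y := by
    have h1 : 1 < Nat.card (Quot (Γ.Conn 2)) := hp
    rw [Finite.one_lt_card_iff_nontrivial] at h1
    obtain ⟨qa, qb, hq⟩ := h1
    obtain ⟨x, rfl⟩ := Quot.exists_rep qa
    obtain ⟨y, rfl⟩ := Quot.exists_rep qb
    exact ⟨x, y, fun hc => hq (Quot.sound hc)⟩
  obtain ⟨v, hv⟩ : ∃ v : V, ¬ Γ.Conn 2 v (Γ.mat 2 v) := by
    suffices h : ∀ y : V, Relation.ReflTransGen (fun a b => ∃ c, Γ.mat c a = b) x0 y →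
        ¬ Γ.Conn 2 x0 y → ∃ v : V, ¬ Γ.Conn 2 v (Γ.mat 2 v) by
      exact h y0 (hconn.2 x0 y0) hxy
    intro y hpath
    induction hpath with
    | refl => intro h; exact absurd Relation.ReflTransGen.refl h
    | @tail b e hab hbe ih =>
      intro hxe
      by_cases hb : Γ.Conn 2 x0 b
      · obtain ⟨c, hc⟩ := hbe
        by_cases hc2 : c = 2
        · subst hc2
          refine ⟨b, fun hcon => hxe ?_⟩
          rw [hc] at hcon
          exact hb.trans hcon
        · exact absurd (hb.tail ⟨c, hc2, hc⟩) hxe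
      · exact ih hb
  exact ⟨v, hv, Γ.comp v hv, Γ.comp_isCompression v hv, Γ.patches_two v hv,
    Γ.patches_le v hv (c := 0) (d := 1) (by decide) (by decide) (by decide) (by decide),
    Γ.patches_le v hv (c := 1) (d := 0) (by decide) (by decide) (by decide) (by decide)⟩
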